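/- Let G and H be finite simple graphs with a bijection φ : E(G) → E(H) between their edge sets, and let S be a subspace of the cycle space of G over F_2 that is locally connected. Suppose that the image of S under the induced isomorphism of F_2-vector spaces (from functions E(G) → F_2 to functions E(H) → F_2) equals the cut space of H. Then for every vertex g of G incident with at least one edge, the image under φ of the set of edges of G incident with g is the edge set of a cycle of the graph H. -/

import Mathlib

open SimpleGraph

/-- The cycle space of `G` over `F₂`, inside the space of functions `E(G) → F₂`:
the span of the characteristic vectors of the edge sets of cycles of `G`. -/
def cycleSpace {V : Type*} [DecidableEq V] (G : SimpleGraph V) :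
    Submodule (ZMod 2) (G.edgeSet → ZMod 2) :=
  Submodule.span (ZMod 2)
    {f | ∃ (u : V) (c : G.Walk u u), c.IsCycle ∧
      f = fun e : G.edgeSet => if (e : Sym2 V) ∈ c.edges then 1 else 0}

/-- The cut space of `H` over `F₂`, inside the space of functions `E(H) → F₂`:
the span of the characteristic vectors of the atomic cuts `δ_H(h)`. -/
def cutSpace {W : Type*} [DecidableEq W] (H : SimpleGraph W) :
    Submodule (ZMod 2) (H.edgeSet → ZMod 2) :=
  Submodule.span (ZMod 2)
    {f | ∃ h : W, f = fun e : H.edgeSet => if h ∈ (e : Sym2 W) then 1 else 0}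

/-- A subspace `S` of the cycle space of `G` is locally connected if for every vertex `v`,
no nonempty proper subset of the set of edges incident with `v` is orthogonal to every
element of `S`. -/
def LocallyConnected {V : Type*} [DecidableEq V] (G : SimpleGraph V)
    (S : Submodule (ZMod 2) (G.edgeSet → ZMod 2)) : Prop :=
  ∀ (v : V) (X : Finset G.edgeSet), (∀ e ∈ X, v ∈ (e : Sym2 V)) → X.Nonempty →
    (∃ e : G.edgeSet, v ∈ (e : Sym2 V) ∧ e ∉ X) →
    ∃ w ∈ S, ∑ e ∈ X, w e ≠ 0

/-- In a closed trail, the number of edges incident with any fixed vertex is even. -/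
private lemma even_card_incident_closed_trail
    {W : Type*} [DecidableEq W] {H : SimpleGraph W}
    {u : W} {c : H.Walk u u} (hc : c.IsTrail) (x : W) (F : Finset H.edgeSet)
    (hF : ∀ e : H.edgeSet, e ∈ F ↔ (x ∈ (e : Sym2 W) ∧ (e : Sym2 W) ∈ c.edges)) :
    Even F.card := by
  have hcount : F.card = c.edges.countP (fun s => x ∈ s) := by
    rw [List.countP_eq_length_filter,
      ← List.toFinset_card_of_nodup (hc.edges_nodup.filter _)]
    refine Finset.card_bij (fun (e : H.edgeSet) (_ : e ∈ F) => (e : Sym2 W)) ?_ ?_ ?_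
    · intro e he
      rw [hF] at he
      simp [List.mem_filter, he.1, he.2]
    · intro e₁ _ e₂ _ h
      exact Subtype.ext h
    · intro s hs
      simp only [List.mem_toFinset, List.mem_filter, decide_eq_true_eq] at hs
      exact ⟨⟨s, c.edges_subset_edgeSet hs.1⟩, (hF _).mpr ⟨hs.2, hs.1⟩, rfl⟩
  rw [hcount]
  exact (hc.even_countP_edges_iff x).mpr (fun h => absurd rfl h)

/-- Any element of the cycle space sums to zero over the star of a vertex. -/
private lemma sum_incident_eq_zero_of_mem_cycleSpace
    {V : Type*} [DecidableEq V] {G : SimpleGraph V}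
    {w : G.edgeSet → ZMod 2} (hw : w ∈ cycleSpace G) (g : V) (F : Finset G.edgeSet)
    (hF : ∀ e : G.edgeSet, e ∈ F ↔ g ∈ (e : Sym2 V)) :
    ∑ e ∈ F, w e = 0 := by
  induction hw using Submodule.span_induction with
  | mem x hx =>
    classical
    obtain ⟨u, c, hc, rfl⟩ := hx
    rw [Finset.sum_boole, ZMod.natCast_eq_zero_iff]
    refine (even_card_incident_closed_trail hc.isCircuit.isTrail g _ ?_).two_dvd
    intro e
    rw [Finset.mem_filter, hF]
  | zero => simp
  | add x y hx hy ihx ihy =>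
    simp only [Pi.add_apply, Finset.sum_add_distrib, ihx, ihy, add_zero]
  | smul a x hx ih =>
    simp only [Pi.smul_apply, smul_eq_mul, ← Finset.mul_sum]
    rw [ih, mul_zero]

/-- Any element of the cut space sums to zero over the edges of a cycle. -/
private lemma sum_cycle_eq_zero_of_mem_cutSpace
    {W : Type*} [DecidableEq W] {H : SimpleGraph W}
    {w : H.edgeSet → ZMod 2} (hw : w ∈ cutSpace H) {u : W} {c : H.Walk u u}
    (hc : c.IsCycle) (F : Finset H.edgeSet)
    (hF : ∀ e : H.edgeSet, e ∈ F ↔ (e : Sym2 W) ∈ c.edges) :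
    ∑ e ∈ F, w e = 0 := by
  induction hw using Submodule.span_induction with
  | mem x hx =>
    classical
    obtain ⟨h, rfl⟩ := hx
    rw [Finset.sum_boole, ZMod.natCast_eq_zero_iff]
    refine (even_card_incident_closed_trail hc.isCircuit.isTrail h _ ?_).two_dvd
    intro e
    rw [Finset.mem_filter, hF]
    tauto
  | zero => simp
  | add x y hx hy ihx ihy =>
    simp only [Pi.add_apply, Finset.sum_add_distrib, ihx, ihy, add_zero]
  | smul a x hx ih =>
    simp only [Pi.smul_apply, smul_eq_mul, ← Finset.mul_sum]
    rw [ih, mul_zero]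

/-- A finite graph in which every endpoint of an edge has a second neighbour
contains a cycle. -/
private lemma exists_cycle_aux {W : Type*} [Fintype W] [DecidableEq W] (K : SimpleGraph W)
    (hdeg : ∀ a b, K.Adj a b → ∃ c, K.Adj a c ∧ c ≠ b)
    (hne : ∃ a b, K.Adj a b) :
    ∃ (u : W) (c : K.Walk u u), c.IsCycle := by
  by_contra hno
  push_neg at hno
  have key : ∀ n, ∃ (u v : W) (p : K.Walk u v), p.IsPath ∧ p.length = n + 1 := by
    intro n
    induction n with
    | zero =>
      obtain ⟨a, b, hab⟩ := hne
      exact ⟨a, b, Walk.cons hab Walk.nil,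
        by simp [Walk.cons_isPath_iff, hab.ne], by simp⟩
    | succ n ih =>
      obtain ⟨u, v, p, hp, hlen⟩ := ih
      cases p with
      | nil => simp at hlen
      | @cons _ b _ h q =>
        obtain ⟨c, hc, hcb⟩ := hdeg u b h
        by_cases hcs : c ∈ (Walk.cons h q).support
        · exfalso
          have hr : ((Walk.cons h q).takeUntil c hcs).IsPath := hp.takeUntil hcs
          have hedge : s(c, u) ∉ ((Walk.cons h q).takeUntil c hcs).edges := by
            intro hmem
            have hmem' : s(c, u) ∈ (Walk.cons h q).edges :=
              Walk.edges_takeUntil_subset _ hcs hmem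
            rw [Walk.edges_cons] at hmem'
            rcases List.mem_cons.mp hmem' with heq | hmemq
            · rcases Sym2.eq_iff.mp heq with ⟨h1, _⟩ | ⟨h1, _⟩
              · exact hc.ne' h1
              · exact hcb h1
            · have hu : u ∈ q.support := Walk.snd_mem_support_of_mem_edges q hmemq
              rw [Walk.cons_isPath_iff] at hp
              exact hp.2 hu
          exact hno c _ ((Walk.cons_isCycle_iff _ hc.symm).mpr ⟨hr, hedge⟩)
        · exact ⟨c, v, Walk.cons hc.symm (Walk.cons h q),
            (Walk.cons_isPath_iff _ _).mpr ⟨hp, hcs⟩, by simp [hlen]⟩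
  obtain ⟨u, v, p, hp, hlen⟩ := key (Fintype.card W)
  have := hp.length_lt
  omega

theorem atomic_cut_is_cycle_of_dual
    {V W : Type*} [Fintype V] [DecidableEq V] [Fintype W] [DecidableEq W]
    (G : SimpleGraph V) (H : SimpleGraph W)
    (φ : G.edgeSet ≃ H.edgeSet)
    (S : Submodule (ZMod 2) (G.edgeSet → ZMod 2))
    (hS : S ≤ cycleSpace G) (hloc : LocallyConnected G S)
    (hmap : Submodule.map
        (LinearMap.funLeft (ZMod 2) (ZMod 2) (φ.symm : H.edgeSet → G.edgeSet)) S
      = cutSpace H) :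
    ∀ g : V, (∃ e : G.edgeSet, g ∈ (e : Sym2 V)) →
      ∃ (h : W) (c : H.Walk h h), c.IsCycle ∧
        {e : Sym2 W | e ∈ c.edges}
          = Subtype.val '' (φ '' {e : G.edgeSet | g ∈ (e : Sym2 V)}) := by
  intro g hg
  obtain ⟨e₀, he₀⟩ := hg
  haveI : Fintype ↑G.edgeSet := Fintype.ofFinite _
  haveI : Fintype ↑H.edgeSet := Fintype.ofFinite _
  -- the subgraph `K` of `H` whose edges are the `φ`-images of the star of `g`
  let K : SimpleGraph W :=
    { Adj := fun a b =>
        ∃ e' : H.edgeSet, g ∈ (↑(φ.symm e') : Sym2 V) ∧ (e' : Sym2 W) = s(a, b)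
      symm := by
        constructor
        rintro a b ⟨e', h1, h2⟩
        exact ⟨e', h1, h2.trans Sym2.eq_swap⟩
      loopless := by
        constructor
        rintro a ⟨e', _, h2⟩
        exact H.not_isDiag_of_mem_edgeSet e'.2 (by rw [h2]; exact Sym2.mk_isDiag_iff.mpr rfl) }
  have hKle : K ≤ H := by
    rintro a b ⟨e', _, h2⟩
    exact H.mem_edgeSet.mp (by rw [← h2]; exact e'.2)
  have hKedge : ∀ z ∈ K.edgeSet, ∃ e' : H.edgeSet,
      g ∈ (↑(φ.symm e') : Sym2 V) ∧ (e' : Sym2 W) = z := by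
    intro z
    induction z using Sym2.ind with
    | _ a b => exact fun hz => K.mem_edgeSet.mp hz
  -- evenness of "K-degrees"
  have hpar : ∀ a : W, Even ((Finset.univ.filter
      (fun e' : H.edgeSet => g ∈ (↑(φ.symm e') : Sym2 V) ∧ a ∈ (e' : Sym2 W))).card) := by
    intro a
    have hcut : (fun e' : H.edgeSet => if a ∈ (e' : Sym2 W) then (1 : ZMod 2) else 0)
        ∈ cutSpace H := Submodule.subset_span ⟨a, rfl⟩
    rw [← hmap] at hcut
    obtain ⟨w, hwS, hw⟩ := hcut
    have h0 : ∑ e ∈ Finset.univ.filter (fun e : G.edgeSet => g ∈ (e : Sym2 V)), w e = 0 :=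
      sum_incident_eq_zero_of_mem_cycleSpace (hS hwS) g _ (fun e => by simp)
    have hre : ∑ e ∈ Finset.univ.filter (fun e : G.edgeSet => g ∈ (e : Sym2 V)), w e
        = ∑ e' ∈ Finset.univ.filter
            (fun e' : H.edgeSet => g ∈ (↑(φ.symm e') : Sym2 V)),
            (if a ∈ (e' : Sym2 W) then (1 : ZMod 2) else 0) := by
      refine Finset.sum_equiv φ (fun e => by simp) (fun e _ => ?_)
      have hcf := congrFun hw (φ e)
      simp only [LinearMap.funLeft_apply, Equiv.symm_apply_apply] at hcf
      exact hcf
    rw [hre, Finset.sum_boole, Finset.filter_filter,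
      ZMod.natCast_eq_zero_iff] at h0
    exact even_iff_two_dvd.mpr h0
  -- every endpoint of an edge of `K` has a second neighbour
  have hdeg : ∀ a b, K.Adj a b → ∃ c, K.Adj a c ∧ c ≠ b := by
    intro a b hab
    by_contra hcon
    push_neg at hcon
    obtain ⟨E, hE1, hE2⟩ := hab
    have hsingle : Finset.univ.filter
        (fun e' : H.edgeSet => g ∈ (↑(φ.symm e') : Sym2 V) ∧ a ∈ (e' : Sym2 W)) = {E} := by
      ext e'
      simp only [Finset.mem_filter, Finset.mem_univ, true_and, Finset.mem_singleton]
      constructor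
      · rintro ⟨hg', ha'⟩
        obtain ⟨x, hx⟩ := Sym2.mem_iff_exists.mp ha'
        have hxb : x = b := hcon x ⟨e', hg', hx⟩
        apply Subtype.ext
        rw [hx, hxb, hE2]
      · rintro rfl
        exact ⟨hE1, by rw [hE2]; exact Sym2.mem_mk_left a b⟩
    have hev := hpar a
    rw [hsingle, Finset.card_singleton] at hev
    exact Nat.not_even_one hev
  -- `K` has an edge
  have hne : ∃ a b, K.Adj a b := by
    obtain ⟨y, hy⟩ := Sym2.mem_iff_exists.mp (Sym2.out_fst_mem ((φ e₀ : H.edgeSet) : Sym2 W))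
    exact ⟨((φ e₀ : H.edgeSet) : Sym2 W).out.1, y, ⟨φ e₀, by simpa using he₀, hy⟩⟩
  obtain ⟨h, c', hc'⟩ := exists_cycle_aux K hdeg hne
  -- transfer the cycle to `H`
  have hidemb : (⇑(SimpleGraph.Hom.ofLE hKle) : W → W) = id := rfl
  have hcyc : (c'.map (SimpleGraph.Hom.ofLE hKle)).IsCycle :=
    hc'.map (by rw [hidemb]; exact Function.injective_id)
  have hedges : (c'.map (SimpleGraph.Hom.ofLE hKle)).edges = c'.edges := by
    rw [Walk.edges_map, hidemb, Sym2.map_id, List.map_id]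
  -- the candidate subset of the star of `g`
  set X : Finset G.edgeSet :=
    Finset.univ.filter (fun e : G.edgeSet => ((φ e : H.edgeSet) : Sym2 W) ∈ c'.edges) with hX
  have claim1 : ∀ e ∈ X, g ∈ (e : Sym2 V) := by
    intro e he
    rw [hX, Finset.mem_filter] at he
    obtain ⟨e', hg', he'⟩ := hKedge _ (c'.edges_subset_edgeSet he.2)
    have : e' = φ e := Subtype.ext he'
    rw [this] at hg'
    simpa using hg'
  have claim2 : X.Nonempty := by
    have hlen := hc'.three_le_length
    obtain ⟨s, hs⟩ := List.exists_mem_of_ne_nil _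
      (List.ne_nil_of_length_pos (by rw [Walk.length_edges]; omega) :
        c'.edges ≠ [])
    obtain ⟨e', hg', he'⟩ := hKedge s (c'.edges_subset_edgeSet hs)
    refine ⟨φ.symm e', ?_⟩
    rw [hX, Finset.mem_filter]
    refine ⟨Finset.mem_univ _, ?_⟩
    rw [Equiv.apply_symm_apply, he']
    exact hs
  have claim3 : ∀ e : G.edgeSet, g ∈ (e : Sym2 V) → e ∈ X := by
    by_contra hcon
    push_neg at hcon
    obtain ⟨w, hwS, hsum⟩ := hloc g X claim1 claim2 hcon
    apply hsum
    have hwcut : (LinearMap.funLeft (ZMod 2) (ZMod 2)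
        (φ.symm : H.edgeSet → G.edgeSet)) w ∈ cutSpace H := by
      rw [← hmap]; exact Submodule.mem_map_of_mem hwS
    have h0 := sum_cycle_eq_zero_of_mem_cutSpace hwcut hcyc
      (Finset.univ.filter (fun e' : H.edgeSet => (e' : Sym2 W) ∈ c'.edges))
      (fun e => by simp [hedges])
    simp only [LinearMap.funLeft_apply] at h0
    calc ∑ e ∈ X, w e
        = ∑ e' ∈ Finset.univ.filter
            (fun e' : H.edgeSet => (e' : Sym2 W) ∈ c'.edges), w (φ.symm e') := by
          refine Finset.sum_equiv φ (fun e => by simp [hX]) (fun e _ => by simp)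
      _ = 0 := h0
  refine ⟨h, c'.map (SimpleGraph.Hom.ofLE hKle), hcyc, ?_⟩
  ext s
  simp only [Set.mem_setOf_eq, Set.mem_image, hedges]
  constructor
  · intro hs
    obtain ⟨e', hg', he'⟩ := hKedge s (c'.edges_subset_edgeSet hs)
    exact ⟨e', ⟨φ.symm e', hg', by simp⟩, he'⟩
  · rintro ⟨y, ⟨e, hge, rfl⟩, rfl⟩
    have hx := claim3 e hge
    rw [hX, Finset.mem_filter] at hx
    exact hx.2
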